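/- Let α > 0 and T > 0, and let u(t) = e^{−αt} + e^{−α(T−t)} be the symmetric mode. Then ∫₀^T u′(t)² dt = α² · (sinh(αT) − αT)/(sinh(αT) + αT) · ∫₀^T u(t)² dt; in particular ∫₀^T u′(t)² dt ≤ α² ∫₀^T u(t)² dt, where u′ denotes the derivative of u. -/

import Mathlib

open Real

set_option maxHeartbeats 1600000

/-- For the symmetric mode `u(t) = e^{−αt} + e^{−α(T−t)}` with `α, T > 0`,
`∫₀^T u′(t)² dt = α² (sinh(αT) − αT)/(sinh(αT) + αT) ∫₀^T u(t)² dt`; in particular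
`∫₀^T u′(t)² dt ≤ α² ∫₀^T u(t)² dt`. -/
theorem symmetric_mode_energy_ratio (α T : ℝ) (hα : 0 < α) (hT : 0 < T)
    (u : ℝ → ℝ) (hu : u = fun t => Real.exp (-α*t) + Real.exp (-α*(T-t))) :
    (∫ t in (0:ℝ)..T, (deriv u t)^2
      = α^2 * ((Real.sinh (α*T) - α*T) / (Real.sinh (α*T) + α*T))
        * ∫ t in (0:ℝ)..T, (u t)^2)
    ∧ (∫ t in (0:ℝ)..T, (deriv u t)^2 ≤ α^2 * ∫ t in (0:ℝ)..T, (u t)^2) := by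
  have hα' : α ≠ 0 := ne_of_gt hα
  obtain ⟨E, hEdef⟩ : ∃ E, E = Real.exp (-α*T) := ⟨_, rfl⟩
  have hEpos : 0 < E := hEdef ▸ Real.exp_pos _
  have h1 : ∀ t : ℝ, HasDerivAt (fun t => Real.exp (-α*t)) (-α * Real.exp (-α*t)) t := by
    intro t
    have := ((hasDerivAt_id t).const_mul (-α)).exp
    simpa [mul_comm] using this
  have h2 : ∀ t : ℝ, HasDerivAt (fun t => Real.exp (-α*(T-t))) (α * Real.exp (-α*(T-t))) t := by
    intro t
    have h : HasDerivAt (fun t : ℝ => -α*(T-t)) α t := by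
      have := ((hasDerivAt_const t T).sub (hasDerivAt_id t)).const_mul (-α)
      simpa using this
    simpa [mul_comm] using h.exp
  have key : ∀ t : ℝ, Real.exp (-α*t) * Real.exp (-α*(T-t)) = E := by
    intro t
    rw [← Real.exp_add, hEdef]
    congr 1
    ring
  have hderiv : deriv u = fun t => -α * Real.exp (-α*t) + α * Real.exp (-α*(T-t)) := by
    funext t
    rw [hu]
    exact ((h1 t).add (h2 t)).deriv
  -- integral of u^2
  have hI2 : (∫ t in (0:ℝ)..T, (u t)^2) = (1 - E^2)/α + 2*T*E := by
    rw [hu]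
    have hF : ∀ t ∈ Set.uIcc (0:ℝ) T, HasDerivAt
        (fun t => (1/(2*α)) * (-(Real.exp (-α*t))^2 + (Real.exp (-α*(T-t)))^2) + 2*E*t)
        ((Real.exp (-α*t) + Real.exp (-α*(T-t)))^2) t := by
      intro t _
      have hd := ((((h1 t).pow 2).neg.add ((h2 t).pow 2)).const_mul (1/(2*α))).add
        ((hasDerivAt_id t).const_mul (2*E))
      refine hd.congr_deriv (Eq.symm ?_)
      have hk := key t
      rw [← hk]
      field_simp
      ring
    rw [intervalIntegral.integral_eq_sub_of_hasDerivAt hF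
      (Continuous.intervalIntegrable (by continuity) _ _)]
    simp only [sub_self, mul_zero, Real.exp_zero, sub_zero]
    rw [← hEdef]
    field_simp
    ring
  -- integral of (deriv u)^2
  have hI1 : (∫ t in (0:ℝ)..T, (deriv u t)^2) = α*(1 - E^2) - 2*α^2*T*E := by
    rw [hderiv]
    have hG : ∀ t ∈ Set.uIcc (0:ℝ) T, HasDerivAt
        (fun t => (α/2) * (-(Real.exp (-α*t))^2 + (Real.exp (-α*(T-t)))^2) - 2*α^2*E*t)
        ((-α * Real.exp (-α*t) + α * Real.exp (-α*(T-t)))^2) t := by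
      intro t _
      have hd := ((((h1 t).pow 2).neg.add ((h2 t).pow 2)).const_mul (α/2)).sub
        ((hasDerivAt_id t).const_mul (2*α^2*E))
      refine hd.congr_deriv (Eq.symm ?_)
      have hk := key t
      rw [← hk]
      field_simp
      ring
    rw [intervalIntegral.integral_eq_sub_of_hasDerivAt hG
      (Continuous.intervalIntegrable (by continuity) _ _)]
    simp only [sub_self, mul_zero, Real.exp_zero, sub_zero]
    rw [← hEdef]
    field_simp
    ring
  -- sinh facts
  have hEE : E * Real.exp (α*T) = 1 := by
    rw [hEdef, ← Real.exp_add]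
    norm_num
  have hEneg : E = Real.exp (-(α*T)) := by rw [hEdef]; ring_nf
  have hE2 : 1 - E^2 = 2*E*Real.sinh (α*T) := by
    rw [Real.sinh_eq]
    linear_combination -hEE - E*hEneg
  have hsgt : α*T < Real.sinh (α*T) := Real.self_lt_sinh_iff.mpr (by positivity)
  have hαT : 0 < α*T := by positivity
  have hden : 0 < Real.sinh (α*T) + α*T := by
    have := Real.sinh_pos_iff.mpr hαT
    linarith
  have hmain : (∫ t in (0:ℝ)..T, (deriv u t)^2)
      = α^2 * ((Real.sinh (α*T) - α*T) / (Real.sinh (α*T) + α*T))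
        * ∫ t in (0:ℝ)..T, (u t)^2 := by
    rw [hI1, hI2, hE2]
    field_simp
  refine ⟨hmain, ?_⟩
  have hInn : 0 ≤ ∫ t in (0:ℝ)..T, (u t)^2 :=
    intervalIntegral.integral_nonneg (le_of_lt hT) (fun t _ => sq_nonneg _)
  rw [hmain]
  have hr : (Real.sinh (α*T) - α*T) / (Real.sinh (α*T) + α*T) ≤ 1 := by
    rw [div_le_one hden]; nlinarith
  calc α^2 * ((Real.sinh (α*T) - α*T) / (Real.sinh (α*T) + α*T)) * (∫ t in (0:ℝ)..T, (u t)^2)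
      ≤ α^2 * 1 * (∫ t in (0:ℝ)..T, (u t)^2) := by
        apply mul_le_mul_of_nonneg_right _ hInn
        apply mul_le_mul_of_nonneg_left hr (by positivity)
    _ = α^2 * (∫ t in (0:ℝ)..T, (u t)^2) := by ring
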